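/- Let μ be a compactly supported probability measure on ℝ^{2×2} such that det(X − Y) ≥ 0 for all X, Y in the support of μ and det μ̄ = ∫ det X dμ. Then det(X − Y) = 0 for all X, Y in the support of μ. -/

import Mathlib

open MeasureTheory Matrix

abbrev M2 := Matrix (Fin 2) (Fin 2) ℝ

noncomputable instance : MeasurableSpace M2 := borel M2
instance : BorelSpace M2 := ⟨rfl⟩

/-- The (topological) support of a measure. -/
def msupport (μ : Measure M2) : Set M2 :=
  {X | ∀ U : Set M2, IsOpen U → X ∈ U → 0 < μ U}

instance : SecondCountableTopology M2 :=
  inferInstanceAs (SecondCountableTopology (Fin 2 → Fin 2 → ℝ))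

lemma integrable_aux {α : Type*} [TopologicalSpace α] [MeasurableSpace α] [OpensMeasurableSpace α]
    [SecondCountableTopology α]
    (ν : Measure α) [IsFiniteMeasure ν] {K : Set α} (hK : IsCompact K) (h0 : ν Kᶜ = 0)
    {f : α → ℝ} (hf : Continuous f) : Integrable f ν := by
  obtain ⟨C, hC⟩ := hK.exists_bound_of_continuousOn hf.continuousOn
  refine ⟨hf.aestronglyMeasurable, HasFiniteIntegral.of_bounded (C := C) ?_⟩
  refine (ae_iff).2 (measure_mono_null (fun x hx => ?_) h0)
  simp only [Set.mem_setOf_eq, not_le] at hx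
  exact fun hxK => absurd (hC x hxK) (not_le.2 hx)

theorem stmt12 (μ : Measure M2) [IsProbabilityMeasure μ]
    (hcomp : IsCompact (msupport μ))
    (hpos : ∀ X ∈ msupport μ, ∀ Y ∈ msupport μ, 0 ≤ (X - Y).det)
    (B : M2) (hbar : ∀ i j, B i j = ∫ X, X i j ∂μ)
    (hdet : B.det = ∫ X, X.det ∂μ) :
    ∀ X ∈ msupport μ, ∀ Y ∈ msupport μ, (X - Y).det = 0 := by
  set K := msupport μ with hKdef
  have hK0 : μ Kᶜ = 0 := by
    apply measure_null_of_locally_null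
    intro x hx
    simp only [hKdef, msupport, Set.mem_compl_iff, Set.mem_setOf_eq, not_forall] at hx
    obtain ⟨U, hUopen, hxU, hU0⟩ := hx
    exact ⟨U, mem_nhdsWithin_of_mem_nhds (hUopen.mem_nhds hxU),
      le_antisymm (not_lt.1 hU0) zero_le⟩
  set ν := μ.prod μ with hνdef
  have hKK : IsCompact (K ×ˢ K) := hcomp.prod hcomp
  have hKK0 : ν (K ×ˢ K)ᶜ = 0 := by
    have hsub : (K ×ˢ K)ᶜ ⊆ (Kᶜ ×ˢ (Set.univ : Set M2)) ∪ ((Set.univ : Set M2) ×ˢ Kᶜ) := by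
      intro z hz
      simp only [Set.mem_compl_iff, Set.mem_prod, not_and] at hz
      by_cases h1 : z.1 ∈ K
      · exact Or.inr ⟨Set.mem_univ _, hz h1⟩
      · exact Or.inl ⟨h1, Set.mem_univ _⟩
    refine measure_mono_null hsub (measure_union_null ?_ ?_)
    · rw [hνdef, Measure.prod_prod, hK0, zero_mul]
    · rw [hνdef, Measure.prod_prod, hK0, mul_zero]
  have hce : ∀ i j, Continuous (fun X : M2 => X i j) :=
    fun i j => continuous_id.matrix_elem i j
  have hcd : Continuous (fun X : M2 => X.det) := continuous_id.matrix_det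
  have hg : Continuous (fun z : M2 × M2 => (z.1 - z.2).det) :=
    (continuous_fst.sub continuous_snd).matrix_det
  have hint : ∀ {f : M2 × M2 → ℝ}, Continuous f → Integrable f ν :=
    fun hf => integrable_aux ν hKK hKK0 hf
  have hi1 : Integrable (fun z : M2 × M2 => z.1.det * 1) ν :=
    hint ((hcd.comp continuous_fst).mul continuous_const)
  have hi2 : Integrable (fun z : M2 × M2 => 1 * z.2.det) ν :=
    hint (continuous_const.mul (hcd.comp continuous_snd))
  have hmul : ∀ (i j k l : Fin 2), Integrable (fun z : M2 × M2 => z.1 i j * z.2 k l) ν :=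
    fun i j k l => hint (((hce i j).comp continuous_fst).mul ((hce k l).comp continuous_snd))
  have hA2 : Integrable (fun z : M2 × M2 => z.1.det * 1 + 1 * z.2.det) ν := by
    exact hi1.add hi2
  have hA3 : Integrable (fun z : M2 × M2 =>
      z.1.det * 1 + 1 * z.2.det + z.1 0 1 * z.2 1 0) ν := by
    exact hA2.add (hmul 0 1 1 0)
  have hA4 : Integrable (fun z : M2 × M2 =>
      z.1.det * 1 + 1 * z.2.det + z.1 0 1 * z.2 1 0 + z.1 1 0 * z.2 0 1) ν := by
    exact hA3.add (hmul 1 0 0 1)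
  have hB2 : Integrable (fun z : M2 × M2 => z.1 0 0 * z.2 1 1 + z.1 1 1 * z.2 0 0) ν := by
    exact (hmul 0 0 1 1).add (hmul 1 1 0 0)
  have hJ : ∫ z, (z.1 - z.2).det ∂ν = 0 := by
    have e0 : ∫ z, (z.1 - z.2).det ∂ν =
        ∫ z, ((z.1.det * 1 + 1 * z.2.det + z.1 0 1 * z.2 1 0 + z.1 1 0 * z.2 0 1)
          - (z.1 0 0 * z.2 1 1 + z.1 1 1 * z.2 0 0)) ∂ν := by
      refine integral_congr_ae (Filter.Eventually.of_forall fun z => ?_)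
      simp only [Matrix.det_fin_two, Matrix.sub_apply]
      ring
    rw [e0, integral_sub hA4 hB2, integral_add hA3 (hmul 1 0 0 1),
      integral_add hA2 (hmul 0 1 1 0), integral_add hi1 hi2,
      integral_add (hmul 0 0 1 1) (hmul 1 1 0 0)]
    rw [hνdef]
    rw [integral_prod_mul (fun X : M2 => X.det) (fun _ : M2 => (1:ℝ)),
      integral_prod_mul (fun _ : M2 => (1:ℝ)) (fun X : M2 => X.det),
      integral_prod_mul (fun X : M2 => X 0 1) (fun X : M2 => X 1 0),
      integral_prod_mul (fun X : M2 => X 1 0) (fun X : M2 => X 0 1),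
      integral_prod_mul (fun X : M2 => X 0 0) (fun X : M2 => X 1 1),
      integral_prod_mul (fun X : M2 => X 1 1) (fun X : M2 => X 0 0)]
    have h1 : ∫ _ : M2, (1:ℝ) ∂μ = 1 := by simp
    rw [h1, ← hbar 0 1, ← hbar 1 0, ← hbar 0 0, ← hbar 1 1, ← hdet, Matrix.det_fin_two]
    ring
  have hnn : 0 ≤ᵐ[ν] fun z : M2 × M2 => (z.1 - z.2).det := by
    refine (ae_iff).2 (measure_mono_null (fun z hz => ?_) hKK0)
    simp only [Set.mem_setOf_eq, Pi.zero_apply, not_le] at hz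
    intro hzm
    exact absurd (hpos z.1 hzm.1 z.2 hzm.2) (not_le.2 hz)
  have hzero : (fun z : M2 × M2 => (z.1 - z.2).det) =ᵐ[ν] 0 :=
    (integral_eq_zero_iff_of_nonneg_ae hnn (hint hg)).1 hJ
  have hnullset : ν {z : M2 × M2 | (z.1 - z.2).det ≠ 0} = 0 := by
    have := (ae_iff).1 hzero
    simpa using this
  intro X hX Y hY
  by_contra h
  have hc : 0 < (X - Y).det := lt_of_le_of_ne (hpos X hX Y hY) (Ne.symm h)
  have hW : IsOpen {z : M2 × M2 | 0 < (z.1 - z.2).det} :=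
    isOpen_lt continuous_const hg
  obtain ⟨U, V, hU, hV, hXU, hYV, hUV⟩ := isOpen_prod_iff.1 hW X Y hc
  have hμU : 0 < μ U := hX U hU hXU
  have hμV : 0 < μ V := hY V hV hYV
  have hposUV : 0 < ν (U ×ˢ V) := by
    rw [hνdef, Measure.prod_prod]
    exact ENNReal.mul_pos hμU.ne' hμV.ne'
  have hz : ν (U ×ˢ V) = 0 :=
    measure_mono_null (fun z hz => (hUV hz).ne') hnullset
  exact absurd hz hposUV.ne'
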